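/- arXiv:2003.04757 — 2 statements merged into one kernel-verified Lean document; each statement's English description precedes it below -/
import Mathlib

section
/- Let $G$ be a group, let $\Gamma$ be a finite forest (acyclic graph) with vertex set $\{1,\dots,n\}$, and let $x_1,\dots,x_n \in G$ be elements satisfying $x_i^2 = 1$ for all $i$ and $x_i x_j = x_j x_i$ whenever $i$ and $j$ are not adjacent in $\Gamma$. Then for any two permutations $\pi, \pi'$ of $\{1,\dots,n\}$, the products $x_{\pi(1)} x_{\pi(2)} \cdots x_{\pi(n)}$ and $x_{\pi'(1)} x_{\pi'(2)} \cdots x_{\pi'(n)}$ are conjugate in $G$. -/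
open SimpleGraph

/-- In a path starting at `u`, any edge containing `u` must be the first edge. -/
lemma edge_at_start {V : Type*} {Γ : SimpleGraph V} {u w v c : V}
    (h : Γ.Adj u w) (r : Γ.Walk w v) (hp : (SimpleGraph.Walk.cons h r).IsPath)
    (he : s(c, u) ∈ (SimpleGraph.Walk.cons h r).edges) : c = w := by
  rw [SimpleGraph.Walk.edges_cons, List.mem_cons] at he
  rcases he with he | he
  · rw [Sym2.eq_iff] at he
    rcases he with ⟨rfl, rfl⟩ | ⟨rfl, -⟩
    · exact absurd h (Γ.irrefl)
    · rfl
  · exfalso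
    have hu : u ∈ r.support := r.snd_mem_support_of_mem_edges he
    rw [SimpleGraph.Walk.cons_isPath_iff] at hp
    exact hp.2 hu

/-- Leaf existence in an acyclic graph, relative to a set `S` containing an edge. -/
lemma exists_leaf {V : Type*} [Fintype V] {Γ : SimpleGraph V} (hΓ : Γ.IsAcyclic)
    (S : Set V) {a b : V} (ha : a ∈ S) (hb : b ∈ S) (hab : Γ.Adj a b) :
    ∃ v ∈ S, ∃ w ∈ S, Γ.Adj v w ∧ ∀ u ∈ S, Γ.Adj v u → u = w := by
  classical
  set Q : ℕ → Prop := fun k =>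
    ∃ (u v : V) (p : Γ.Walk u v), p.IsPath ∧ (∀ z ∈ p.support, z ∈ S) ∧ p.length = k with hQ
  have hQ1 : Q 1 := by
    refine ⟨a, b, SimpleGraph.Walk.cons hab SimpleGraph.Walk.nil, ?_, ?_, rfl⟩
    · rw [SimpleGraph.Walk.cons_isPath_iff]
      refine ⟨SimpleGraph.Walk.IsPath.nil, ?_⟩
      simp [hab.ne]
    · intro z hz
      simp only [SimpleGraph.Walk.support_cons, SimpleGraph.Walk.support_nil,
        List.mem_cons, List.mem_singleton] at hz
      rcases hz with rfl | hz
      · exact ha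
      · simp at hz; subst hz; exact hb
  have hcard : 1 ≤ Fintype.card V := Fintype.card_pos_iff.mpr ⟨a⟩
  set k := Nat.findGreatest Q (Fintype.card V) with hk
  have hQk : Q k := Nat.findGreatest_spec hcard hQ1
  have hk1 : 1 ≤ k := Nat.le_findGreatest hcard hQ1
  obtain ⟨u, v, p, hp, hsupp, hlen⟩ := hQk
  -- the path is nonempty
  cases p with
  | nil => simp at hlen; omega
  | cons h r =>
    rename_i w                      -- second vertex
    refine ⟨u, hsupp _ (SimpleGraph.Walk.start_mem_support _), w,
      hsupp _ (by simp [SimpleGraph.Walk.support_cons]), h, ?_⟩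
    intro c hc hadj
    by_contra hne
    by_cases hmem : c ∈ (SimpleGraph.Walk.cons h r).support
    · -- build a cycle
      have hq := hp.takeUntil hmem
      have hedge : s(c, u) ∉ ((SimpleGraph.Walk.cons h r).takeUntil c hmem).edges := by
        intro hmem'
        exact hne (edge_at_start h r hp
          (SimpleGraph.Walk.edges_takeUntil_subset _ _ hmem'))
      exact hΓ _ (SimpleGraph.Path.cons_isCycle ⟨_, hq⟩ hadj.symm hedge)
    · -- extend the path, contradicting maximality
      have hp' : (SimpleGraph.Walk.cons (hadj.symm) (SimpleGraph.Walk.cons h r)).IsPath := by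
        rw [SimpleGraph.Walk.cons_isPath_iff]; exact ⟨hp, hmem⟩
      have hlt : k + 1 ≤ Fintype.card V := by
        have := hp'.length_lt
        simp only [SimpleGraph.Walk.length_cons] at this hlen ⊢
        omega
      refine Nat.findGreatest_is_greatest (lt_add_one k) hlt ?_
      refine ⟨c, v, _, hp', ?_, by simp [hlen]⟩
      intro z hz
      rw [SimpleGraph.Walk.support_cons, List.mem_cons] at hz
      rcases hz with rfl | hz
      · exact hc
      · exact hsupp _ hz

lemma conj_rotate {G : Type*} [Group G] (A B : G) : IsConj (A * B) (B * A) := by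
  rw [isConj_iff]
  exact ⟨A⁻¹, by group⟩

/-- Moving a "leaf" element `x v` next to its unique non-commuting partner `x w`
and gluing them:  the product over `l` is conjugate to the product over a
permutation of `l.erase v` where `x w` has been replaced by `x v * x w`. -/
lemma normalize_leaf {G : Type*} [Group G] {V : Type*} [DecidableEq V]
    (x : V → G) (l : List V) (hnd : l.Nodup) {v w : V} (hv : v ∈ l) (hw : w ∈ l)
    (hvw : v ≠ w) (hcv : ∀ j ∈ l, j ≠ v → j ≠ w → Commute (x v) (x j)) :
    ∃ m : List V, m.Perm (l.erase v) ∧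
      IsConj (l.map x).prod
        ((m.map (fun u => if u = w then x v * x w else x u)).prod) := by
  classical
  obtain ⟨a, b, rfl⟩ := List.append_of_mem hv
  have hnd' : (v :: (a ++ b)).Nodup := (List.perm_middle.nodup_iff).mp hnd
  rw [List.nodup_cons] at hnd'
  have hvab : v ∉ a ++ b := hnd'.1
  -- w ∈ b ++ a
  have hwba : w ∈ b ++ a := by
    have : w ∈ a ++ b := by
      rcases List.mem_append.mp hw with h | h
      · exact List.mem_append.mpr (Or.inl h)
      · rcases List.mem_cons.mp h with h | h
        · exact absurd h.symm hvw
        · exact List.mem_append.mpr (Or.inr h)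
    rw [List.mem_append] at this ⊢; tauto
  obtain ⟨s, t, hst⟩ := List.append_of_mem hwba
  have hndba : (b ++ a).Nodup := (List.perm_append_comm.nodup_iff).mp hnd'.2
  have hndst : (w :: (s ++ t)).Nodup := by
    rw [hst] at hndba
    exact (List.perm_middle.nodup_iff).mp hndba
  rw [List.nodup_cons] at hndst
  have hws : w ∉ s := fun h => hndst.1 (List.mem_append.mpr (Or.inl h))
  have hwt : w ∉ t := fun h => hndst.1 (List.mem_append.mpr (Or.inr h))
  refine ⟨b ++ a, ?_, ?_⟩
  · have : (a ++ v :: b).erase v = a ++ b := by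
      rw [List.erase_append_right _ (fun h => hvab (List.mem_append.mpr (Or.inl h))),
        List.erase_cons_head]
    rw [this]
    exact List.perm_append_comm
  · -- step 1: rotate
    have h1 : IsConj ((a ++ v :: b).map x).prod ((x v) * ((b ++ a).map x).prod) := by
      have : ((a ++ v :: b).map x).prod = (a.map x).prod * ((x v) * (b.map x).prod) := by
        simp [List.prod_append]
      rw [this]
      have h2 := conj_rotate ((a.map x).prod) ((x v) * (b.map x).prod)
      have : (x v) * ((b ++ a).map x).prod = ((x v) * (b.map x).prod) * (a.map x).prod := by
        simp [List.prod_append, mul_assoc]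
      rw [this]
      exact h2
    -- step 2: commute x v past s and glue
    have h3 : (x v) * ((b ++ a).map x).prod
        = ((b ++ a).map (fun u => if u = w then x v * x w else x u)).prod := by
      rw [hst]
      have hjl : ∀ j ∈ s, j ∈ a ++ v :: b ∧ j ≠ v ∧ j ≠ w := by
        intro j hj
        have hjba : j ∈ b ++ a := by
          rw [hst]; exact List.mem_append.mpr (Or.inl hj)
        have hjab : j ∈ a ++ b := List.perm_append_comm.mem_iff.mp hjba
        refine ⟨?_, fun h => hvab (h ▸ hjab), fun h => hws (h ▸ hj)⟩
        rcases List.mem_append.mp hjab with h | h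
        · exact List.mem_append.mpr (Or.inl h)
        · exact List.mem_append.mpr (Or.inr (List.mem_cons_of_mem _ h))
      have hcs : Commute (x v) ((s.map x).prod) := by
        apply Commute.list_prod_right
        intro y hy
        obtain ⟨j, hj, rfl⟩ := List.mem_map.mp hy
        obtain ⟨h1, h2, h3⟩ := hjl j hj
        exact hcv j h1 h2 h3
      have hms : s.map (fun u => if u = w then x v * x w else x u) = s.map x := by
        apply List.map_congr_left
        intro u hu
        exact if_neg (by rintro rfl; exact hws hu)
      have hmt : t.map (fun u => if u = w then x v * x w else x u) = t.map x := by
        apply List.map_congr_left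
        intro u hu
        exact if_neg (by rintro rfl; exact hwt hu)
      calc x v * ((s ++ w :: t).map x).prod
          = x v * ((s.map x).prod * (x w * (t.map x).prod)) := by
            simp [List.prod_append]
        _ = (s.map x).prod * (x v * x w * (t.map x).prod) := by
            rw [← mul_assoc, hcs.eq]; simp [mul_assoc]
        _ = ((s ++ w :: t).map (fun u => if u = w then x v * x w else x u)).prod := by
            simp [List.prod_append, hms, hmt, mul_assoc]
    exact h3 ▸ h1

lemma aux_main {G : Type*} [Group G] {V : Type*} [Fintype V] [DecidableEq V]
    {Γ : SimpleGraph V} (hΓ : Γ.IsAcyclic) :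
    ∀ (N : ℕ) (x : V → G) (l₁ l₂ : List V), l₁.length ≤ N → l₁.Nodup → l₁.Perm l₂ →
      (∀ i ∈ l₁, ∀ j ∈ l₁, ¬ Γ.Adj i j → Commute (x i) (x j)) →
      IsConj (l₁.map x).prod (l₂.map x).prod := by
  intro N
  induction N with
  | zero =>
    intro x l₁ l₂ hlen _ hperm _
    have h1 : l₁ = [] := List.length_eq_zero_iff.mp (Nat.le_zero.mp hlen)
    subst h1
    have h2 : l₂ = [] := hperm.symm.eq_nil
    subst h2
    simp
  | succ N ih =>
    intro x l₁ l₂ hlen hnd hperm hcomm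
    by_cases hedge : ∃ i ∈ l₁, ∃ j ∈ l₁, Γ.Adj i j
    · obtain ⟨i, hi, j, hj, hij⟩ := hedge
      obtain ⟨v, hv, w, hw, hvw, hleaf⟩ :=
        exists_leaf hΓ {z | z ∈ l₁} hi hj hij
      have hv : v ∈ l₁ := hv
      have hw : w ∈ l₁ := hw
      have hcv₁ : ∀ j ∈ l₁, j ≠ v → j ≠ w → Commute (x v) (x j) := fun j hjl _ h2 =>
        hcomm v hv j hjl (fun hadj => h2 (hleaf j hjl hadj))
      obtain ⟨m₁, hm₁, hc₁⟩ := normalize_leaf x l₁ hnd hv hw hvw.ne hcv₁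
      have hnd₂ : l₂.Nodup := hperm.nodup_iff.mp hnd
      have hcv₂ : ∀ j ∈ l₂, j ≠ v → j ≠ w → Commute (x v) (x j) := fun j hjl h1 h2 =>
        hcv₁ j (hperm.mem_iff.mpr hjl) h1 h2
      obtain ⟨m₂, hm₂, hc₂⟩ := normalize_leaf x l₂ hnd₂ (hperm.mem_iff.mp hv)
        (hperm.mem_iff.mp hw) hvw.ne hcv₂
      set x' := fun u => if u = w then x v * x w else x u with hx'
      have hmem₁ : ∀ i ∈ m₁, i ≠ v ∧ i ∈ l₁ := by
        intro i hi'
        exact (List.Nodup.mem_erase_iff hnd).mp (hm₁.mem_iff.mp hi')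
      have hkey : IsConj (m₁.map x').prod (m₂.map x').prod := by
        apply ih x' m₁ m₂
        · rw [hm₁.length_eq, List.length_erase_of_mem hv]
          omega
        · exact hm₁.nodup_iff.mpr (hnd.erase v)
        · exact hm₁.trans ((hperm.erase v).trans hm₂.symm)
        · intro i hi' j hj' hnadj
          obtain ⟨hiv, hil⟩ := hmem₁ i hi'
          obtain ⟨hjv, hjl⟩ := hmem₁ j hj'
          have hvj : ∀ k, k ∈ l₁ → k ≠ w → Commute (x v) (x k) := fun k hk h2 =>
            hcomm v hv k hk (fun hadj => h2 (hleaf k hk hadj))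
          by_cases hiw : i = w <;> by_cases hjw : j = w
          · rw [hiw, hjw]
          · rw [show x' i = x v * x w by simp [hx', hiw],
              show x' j = x j by simp [hx', hjw]]
            exact Commute.mul_left (hvj j hjl hjw) (hcomm w hw j hjl (hiw ▸ hnadj))
          · rw [show x' j = x v * x w by simp [hx', hjw],
              show x' i = x i by simp [hx', hiw]]
            exact Commute.mul_right ((hvj i hil hiw).symm)
              ((hcomm w hw i hil (fun h => (hjw ▸ hnadj) h.symm)).symm)
          · simp only [hx', if_neg hiw, if_neg hjw]
            exact hcomm i hil j hjl hnadj
      exact hc₁.trans (hkey.trans hc₂.symm)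
    · push_neg at hedge
      have hpw : (l₁.map x).Pairwise Commute := by
        rw [List.pairwise_map]
        apply List.pairwise_of_forall_mem_list
        intro a ha b hb
        by_cases hab : a = b
        · subst hab; exact Commute.refl _
        · exact hcomm a ha b hb (hedge a ha b hb)
      rw [(hperm.map x).prod_eq' hpw]

/-- Let `G` be a group, `Γ` a finite forest with vertex set `{1, …, n}`, and
`x₁, …, xₙ ∈ G` elements with `xᵢ² = 1` which commute whenever the corresponding
vertices are non-adjacent in `Γ`.  Then the products of all the `xᵢ`, each occurring
exactly once, taken in any two orders, are conjugate in `G`. -/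
theorem products_conjugate_of_forest
    {G : Type*} [Group G] {n : ℕ}
    (Γ : SimpleGraph (Fin n)) (hforest : Γ.IsAcyclic)
    (x : Fin n → G) (hsq : ∀ i, (x i) ^ 2 = 1)
    (hcomm : ∀ i j, ¬ Γ.Adj i j → Commute (x i) (x j))
    (π π' : Equiv.Perm (Fin n)) :
    IsConj (((List.finRange n).map (fun i => x (π i))).prod)
           (((List.finRange n).map (fun i => x (π' i))).prod) := by
  classical
  have hnd : ∀ σ : Equiv.Perm (Fin n), ((List.finRange n).map σ).Nodup :=
    fun σ => (List.nodup_finRange n).map σ.injective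
  have hperm : ((List.finRange n).map π).Perm ((List.finRange n).map π') := by
    rw [List.perm_ext_iff_of_nodup (hnd π) (hnd π')]
    intro a
    simp only [List.mem_map, List.mem_finRange, true_and]
    constructor
    · rintro ⟨b, rfl⟩; exact ⟨π'.symm (π b), by simp⟩
    · rintro ⟨b, rfl⟩; exact ⟨π.symm (π' b), by simp⟩
  have h := aux_main hforest (((List.finRange n).map π).length) x _ _ le_rfl (hnd π) hperm
    (fun i _ j _ h => hcomm i j h)
  simpa [List.map_map, Function.comp_def] using h
end

section
/- Let $G$ be a group, $\Gamma$ a finite forest with vertex set $\{1,\dots,n\}$, and $x_1,\dots,x_n \in G$ with $x_i^2 = 1$ for all $i$ and $x_i x_j = x_j x_i$ whenever $i,j$ are non-adjacent in $\Gamma$. Set $c = x_1 x_2 \cdots x_n$. Then $c$ is conjugate in $G$ to $c^{-1}$. -/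
open SimpleGraph

section aux

variable {V : Type*} {G : Type*} [Group G]

private lemma isConj_mul_swap (a b : G) : IsConj (a * b) (b * a) :=
  isConj_iff.mpr ⟨a⁻¹, by group⟩

private lemma conj_append_swap (x : V → G) (A B : List V) :
    IsConj ((A ++ B).map x).prod ((B ++ A).map x).prod := by
  simp only [List.map_append, List.prod_append]
  exact isConj_mul_swap _ _

/-- In an acyclic graph, every nonempty set of vertices contains a vertex with at
most one neighbour inside the set. -/
private lemma exists_forest_leaf [Fintype V] [DecidableEq V] (Γ : SimpleGraph V)
    (hΓ : Γ.IsAcyclic) (s : Set V) (hs : s.Nonempty) :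
    ∃ v ∈ s, ∃ y : V, ∀ w ∈ s, Γ.Adj v w → w = y := by
  classical
  by_contra hcon
  push_neg at hcon
  have key : ∀ k : ℕ, ∃ (u v : V) (p : Γ.Walk u v), p.IsPath ∧
      (∀ z ∈ p.support, z ∈ s) ∧ p.length = k := by
    intro k
    induction k with
    | zero =>
      obtain ⟨v, hv⟩ := hs
      exact ⟨v, v, .nil, by simp, by simpa using hv, rfl⟩
    | succ k ihk =>
      obtain ⟨u, v, p, hp, hps, hpl⟩ := ihk
      have hv : v ∈ s := hps v p.end_mem_support
      obtain ⟨w, hw, hadj, hwy⟩ := hcon v hv (p.reverse.getVert 1)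
      by_cases hwsup : w ∈ p.support
      · exfalso
        have hwr : w ∈ p.reverse.support := by
          rwa [Walk.support_reverse, List.mem_reverse]
        set r := p.reverse with hr
        have hrp : r.IsPath := hp.reverse
        set q := r.takeUntil w hwr with hq
        have hqp : q.IsPath := hrp.takeUntil hwr
        -- by path uniqueness, q is the single edge path
        have hq1 : q.length = 1 := by
          have := isAcyclic_iff_path_unique.mp hΓ ⟨q, hqp⟩ (Path.singleton hadj)
          have hval : q = (Path.singleton hadj : Γ.Walk v w) := congrArg Subtype.val this
          rw [hval]
          simp [Path.singleton]
        -- then w is the second vertex of r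
        apply hwy
        have hspec := (r.take_spec hwr).symm
        have : r.getVert 1 = w := by
          conv_lhs => rw [hspec]
          rw [Walk.getVert_append]
          rw [← hq]
          simp [hq1]
        exact this.symm
      · -- extend the path
        have hpath : (p.concat hadj).IsPath := by
          have : (p.concat hadj).reverse.IsPath := by
            rw [Walk.reverse_concat]
            rw [Walk.cons_isPath_iff]
            constructor
            · exact hp.reverse
            · rwa [Walk.support_reverse, List.mem_reverse]
          simpa [Walk.concat] using this.reverse
        refine ⟨u, w, p.concat hadj, hpath, ?_, ?_⟩
        · intro z hz
          rw [Walk.support_concat, List.mem_append] at hz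
          rcases hz with hz | hz
          · exact hps z hz
          · simp at hz; exact hz ▸ hw
        · rw [Walk.length_concat, hpl]
  obtain ⟨u, v, p, hp, -, hpl⟩ := key (Fintype.card V)
  exact (Nat.ne_of_lt hp.length_lt) hpl

/-- Products of elements indexed by a nodup list over a forest, where
non-adjacent vertices carry commuting elements, are conjugation-invariant
under permutations of the list. -/
private lemma conj_of_perm_forest [Fintype V] [DecidableEq V] (Γ : SimpleGraph V)
    (hΓ : Γ.IsAcyclic) :
    ∀ (N : ℕ) (L L' : List V) (x : V → G), L.length = N → L.Nodup → L'.Perm L →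
      (∀ i ∈ L, ∀ j ∈ L, ¬Γ.Adj i j → Commute (x i) (x j)) →
      IsConj (L.map x).prod (L'.map x).prod := by
  intro N
  induction N using Nat.strong_induction_on with
  | _ N ih =>
    intro L L' x hlen hnd hperm hcomm
    by_cases hL : L = []
    · subst hL
      rw [List.Perm.eq_nil hperm]
    -- find a leaf of the induced forest on the elements of L
    obtain ⟨v, hvL, y, hy⟩ := exists_forest_leaf Γ hΓ {a | a ∈ L}
      (by obtain ⟨a, ha⟩ := List.exists_mem_of_ne_nil L hL; exact ⟨a, ha⟩)
    simp only [Set.mem_setOf_eq] at hvL hy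
    obtain ⟨P₁, Q₁, rfl⟩ := List.append_of_mem hvL
    have hvL' : v ∈ L' := hperm.mem_iff.mpr hvL
    obtain ⟨P₂, Q₂, rfl⟩ := List.append_of_mem hvL'
    set M : List V := Q₁ ++ P₁ with hM
    set M' : List V := Q₂ ++ P₂ with hM'
    -- cyclic rotations
    have step1 : IsConj ((P₁ ++ v :: Q₁).map x).prod ((M ++ [v]).map x).prod := by
      refine (conj_append_swap x P₁ (v :: Q₁)).trans ?_
      exact conj_append_swap x [v] M
    have step1' : IsConj ((P₂ ++ v :: Q₂).map x).prod ((M' ++ [v]).map x).prod := by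
      refine (conj_append_swap x P₂ (v :: Q₂)).trans ?_
      exact conj_append_swap x [v] M'
    -- bookkeeping: nodup and perm facts
    have hpermvM : (v :: M).Perm (P₁ ++ v :: Q₁) := by
      refine .trans ?_ List.perm_middle.symm
      exact .cons v (List.perm_append_comm)
    have hpermvM' : (v :: M').Perm (P₂ ++ v :: Q₂) := by
      refine .trans ?_ List.perm_middle.symm
      exact .cons v (List.perm_append_comm)
    have hndvM : (v :: M).Nodup := (hpermvM.symm).nodup hnd
    have hndM : M.Nodup := hndvM.of_cons
    have hvM : v ∉ M := (List.nodup_cons.mp hndvM).1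
    have hMM' : M'.Perm M :=
      (List.Perm.cons_inv (hpermvM'.trans (hperm.trans hpermvM.symm)))
    have hmemML : ∀ a ∈ M, a ∈ P₁ ++ v :: Q₁ := fun a ha =>
      hpermvM.mem_iff.mp (List.mem_cons_of_mem v ha)
    by_cases hMnil : M = []
    · have hM'nil : M' = [] := by
        rw [hMnil] at hMM'; exact List.Perm.eq_nil hMM'
      rw [hMnil] at step1
      rw [hM'nil] at step1'
      exact step1.trans step1'.symm
    -- choose the (unique possible) neighbour w of v inside M
    set w : V := if y ∈ M then y else M.head hMnil with hw
    have hwM : w ∈ M := by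
      rw [hw]; split
      · assumption
      · exact List.head_mem hMnil
    have hQ : ∀ j ∈ M, j ≠ w → Commute (x j) (x v) := by
      intro j hj hjw
      by_cases hadj : Γ.Adj v j
      · exfalso
        have hjy : j = y := hy j (hmemML j hj) hadj
        have hyM : y ∈ M := hjy ▸ hj
        exact hjw (hjy.trans (by rw [hw, if_pos hyM]))
      · exact hcomm j (hmemML j hj) v hvL (fun h => hadj h.symm)
    set x' : V → G := Function.update x w (x w * x v) with hx'
    have keyprod : ∀ K : List V, K.Nodup → w ∈ K →
        (∀ j ∈ K, j ≠ w → Commute (x j) (x v)) →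
        (K.map x').prod = (K.map x).prod * x v := by
      intro K hndK hwK hQK
      obtain ⟨A, B, rfl⟩ := List.append_of_mem hwK
      have hwA : w ∉ A := by
        intro h
        exact (List.disjoint_of_nodup_append hndK) h List.mem_cons_self
      have hwB : w ∉ B := by
        have := hndK.of_append_right
        exact (List.nodup_cons.mp this).1
      have mapA : A.map x' = A.map x :=
        List.map_congr_left fun a ha => Function.update_of_ne (fun (h : a = w) => hwA (h ▸ ha)) _ x
      have mapB : B.map x' = B.map x :=
        List.map_congr_left fun a ha => Function.update_of_ne (fun (h : a = w) => hwB (h ▸ ha)) _ x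
      have hcommB : Commute (x v) ((B.map x).prod) := by
        apply Commute.list_prod_right
        intro b hb
        obtain ⟨j, hj, rfl⟩ := List.mem_map.mp hb
        exact (hQK j (List.mem_append_right A (List.mem_cons_of_mem w hj))
          (fun h => hwB (h ▸ hj))).symm
      rw [List.map_append, List.map_cons, mapA, mapB]
      simp only [List.map_append, List.map_cons, List.prod_append, List.prod_cons,
        mapA, mapB, hx', Function.update_self]
      rw [mul_assoc (x w) (x v), hcommB.eq]
      group
    have hcomm' : ∀ i ∈ M, ∀ j ∈ M, ¬Γ.Adj i j → Commute (x' i) (x' j) := by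
      intro i hi j hj hadj
      by_cases hiw : i = w <;> by_cases hjw : j = w
      · subst hiw; subst hjw; exact Commute.refl _
      · subst hiw
        rw [hx', Function.update_self, Function.update_of_ne hjw]
        exact Commute.mul_left
          (hcomm w (hmemML w hwM) j (hmemML j hj) hadj)
          ((hQ j hj hjw).symm)
      · subst hjw
        rw [hx', Function.update_self, Function.update_of_ne hiw]
        exact Commute.mul_right
          (hcomm i (hmemML i hi) w (hmemML w hwM) hadj)
          (hQ i hi hiw)
      · rw [hx', Function.update_of_ne hiw, Function.update_of_ne hjw]
        exact hcomm i (hmemML i hi) j (hmemML j hj) hadj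
    have hlenM : M.length < N := by
      have : (P₁ ++ v :: Q₁).length = N := hlen
      simp only [List.length_append, List.length_cons, hM] at this ⊢
      omega
    have ihres : IsConj (M.map x').prod ((M'.map x').prod) :=
      ih M.length hlenM M M' x' rfl hndM hMM' hcomm'
    have keyM : (M.map x').prod = (M.map x).prod * x v := keyprod M hndM hwM hQ
    have keyM' : (M'.map x').prod = (M'.map x).prod * x v := by
      refine keyprod M' (hMM'.symm.nodup hndM) (hMM'.mem_iff.mpr hwM) ?_
      intro j hj hjw
      exact hQ j (hMM'.mem_iff.mp hj) hjw
    have eqM : ((M ++ [v]).map x).prod = (M.map x').prod := by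
      rw [keyM]; simp [List.map_append, List.prod_append]
    have eqM' : ((M' ++ [v]).map x).prod = (M'.map x').prod := by
      rw [keyM']; simp [List.map_append, List.prod_append]
    refine step1.trans (.trans ?_ step1'.symm)
    rw [eqM, eqM']
    exact ihres

end aux

/-- Let `G` be a group, `Γ` a finite forest with vertex set `{1, …, n}`, and
`x₁, …, xₙ ∈ G` with `xᵢ² = 1`, commuting whenever the corresponding vertices are
non-adjacent in `Γ`.  Then `c = x₁ x₂ ⋯ xₙ` is conjugate in `G` to `c⁻¹`. -/
theorem product_conjugate_to_inverse_of_forest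
    {G : Type*} [Group G] {n : ℕ}
    (Γ : SimpleGraph (Fin n)) (hforest : Γ.IsAcyclic)
    (x : Fin n → G) (hsq : ∀ i, (x i) ^ 2 = 1)
    (hcomm : ∀ i j, ¬ Γ.Adj i j → Commute (x i) (x j)) :
    IsConj (((List.finRange n).map x).prod) (((List.finRange n).map x).prod)⁻¹ := by
  classical
  have hinv : ∀ i, (x i)⁻¹ = x i := fun i =>
    inv_eq_of_mul_eq_one_right (by rw [← sq]; exact hsq i)
  have hrev : (((List.finRange n).map x).prod)⁻¹
      = (((List.finRange n).reverse).map x).prod := by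
    rw [List.prod_inv_reverse]
    simp [List.map_reverse, List.map_map, Function.comp_def, hinv]
  rw [hrev]
  exact conj_of_perm_forest Γ hforest (List.finRange n).length (List.finRange n)
    ((List.finRange n).reverse) x rfl (List.nodup_finRange n) (List.reverse_perm _)
    (fun i _ j _ h => hcomm i j h)
end
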